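/- Let K be a simplicial complex, ξ = e^{2πi/N}, and define d_n : C_n(K;ℂ) → C_{n-1}(K;ℂ) by d_n⟨v₀,...,v_n⟩ = Σ_{i=0}^{n} ξ^i ⟨v₀,...,v̂_i,...,v_n⟩. Then the N-fold composition d^N is the zero map. -/

import Mathlib

/-- The Mayer differential on simplicial chains: on a simplex `σ` (a finite set of vertices,
listed in increasing order `v₀ < ⋯ < v_n`), `d σ = ∑_{i=0}^{n} ξ^i ⟨v₀,…,v̂_i,…,v_n⟩`,
and `d = 0` on vertices (`d_0 = 0`). -/
noncomputable def mayerD {ι : Type*} [LinearOrder ι] (ξ : ℂ) :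
    (Finset ι →₀ ℂ) →ₗ[ℂ] (Finset ι →₀ ℂ) :=
  Finsupp.lsum ℂ fun σ =>
    LinearMap.toSpanSingleton ℂ _
      (if σ.card ≤ 1 then 0 else
        ∑ i : Fin (σ.sort (· ≤ ·)).length,
          ξ ^ (i : ℕ) • Finsupp.single (σ.erase ((σ.sort (· ≤ ·)).get i)) (1 : ℂ))

namespace MayerAux

open Finset

/-- rank of `a` inside `σ` : number of elements of `σ` strictly less than `a`. -/
def rk (σ : Finset ℕ) (a : ℕ) : ℕ := (σ.filter (· < a)).card

lemma sum_rk {M : Type*} [AddCommMonoid M] (σ : Finset ℕ) (g : ℕ → M) :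
    ∑ a ∈ σ, g (rk σ a) = ∑ j ∈ Finset.range σ.card, g j := by
  induction σ using Finset.induction_on_max with
  | empty => simp
  | insert a s ha ih =>
    have has : a ∉ s := fun h => lt_irrefl a (ha a h)
    have h1 : rk (insert a s) a = s.card := by
      unfold rk
      rw [Finset.filter_insert, if_neg (lt_irrefl a), Finset.filter_true_of_mem ha]
    have h2 : ∀ x ∈ s, rk (insert a s) x = rk s x := by
      intro x hx
      unfold rk
      rw [Finset.filter_insert, if_neg (asymm (ha x hx))]
    rw [Finset.sum_insert has, h1, Finset.sum_congr rfl (fun x hx => by rw [h2 x hx]), ih,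
      Finset.card_insert_of_notMem has, Finset.sum_range_succ, add_comm]

lemma rk_sort_get (σ : Finset ℕ) (i : Fin (σ.sort (· ≤ ·)).length) :
    rk σ ((σ.sort (· ≤ ·)).get i) = i := by
  have hmono : StrictMono (σ.sort (· ≤ ·)).get := (σ.sortedLT_sort).strictMono_get
  have himg : σ.filter (· < (σ.sort (· ≤ ·)).get i)
      = (Finset.Iio i).image (fun j => (σ.sort (· ≤ ·)).get j) := by
    ext b
    simp only [Finset.mem_filter, Finset.mem_image, Finset.mem_Iio]
    constructor
    · rintro ⟨hb, hlt⟩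
      obtain ⟨j, hj⟩ := List.mem_iff_get.mp ((Finset.mem_sort (· ≤ ·)).mpr hb)
      exact ⟨j, hmono.lt_iff_lt.mp (by rw [hj]; exact hlt), hj⟩
    · rintro ⟨j, hji, rfl⟩
      refine ⟨(Finset.mem_sort (· ≤ ·)).mp ?_, hmono hji⟩
      exact List.get_mem _ _
  rw [rk, himg, Finset.card_image_of_injective _ hmono.injective, Fin.card_Iio]

lemma list_sum_get {α M : Type*} [AddCommMonoid M] (l : List α) (f : α → M) :
    ∑ i : Fin l.length, f (l.get i) = (l.map f).sum := by
  induction l with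
  | nil => simp
  | cons x xs ih => simp [Fin.sum_univ_succ, ih]

lemma list_toFinset_sum {M : Type*} [AddCommMonoid M] (l : List ℕ) (hl : l.Nodup)
    (f : ℕ → M) : ∑ a ∈ l.toFinset, f a = (l.map f).sum := by
  induction l with
  | nil => simp
  | cons x xs ih =>
    rw [List.nodup_cons] at hl
    rw [List.toFinset_cons, Finset.sum_insert (by simpa using hl.1), List.map_cons,
      List.sum_cons, ih hl.2]

lemma sum_sort {M : Type*} [AddCommMonoid M] (σ : Finset ℕ) (f : ℕ → M) :
    ∑ i : Fin (σ.sort (· ≤ ·)).length, f ((σ.sort (· ≤ ·)).get i) = ∑ a ∈ σ, f a := by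
  rw [list_sum_get, ← list_toFinset_sum _ (σ.sort_nodup (· ≤ ·)) f, Finset.sort_toFinset]

lemma mayerD_single (ξ : ℂ) (σ : Finset ℕ) (h : 2 ≤ σ.card) :
    mayerD ξ (Finsupp.single σ 1) =
      ∑ a ∈ σ, ξ ^ rk σ a • Finsupp.single (σ.erase a) (1 : ℂ) := by
  rw [mayerD, Finsupp.lsum_single, LinearMap.toSpanSingleton_apply, one_smul,
    if_neg (by omega)]
  rw [← sum_sort σ (fun a => ξ ^ rk σ a • Finsupp.single (σ.erase a) (1 : ℂ))]
  exact Finset.sum_congr rfl fun i _ => by rw [rk_sort_get]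

lemma mayerD_single_zero (ξ : ℂ) (σ : Finset ℕ) (h : σ.card ≤ 1) :
    mayerD ξ (Finsupp.single σ 1) = 0 := by
  rw [mayerD, Finsupp.lsum_single, LinearMap.toSpanSingleton_apply, one_smul, if_pos h]

lemma rk_sdiff_add (σ S : Finset ℕ) (hS : S ⊆ σ) (a : ℕ) :
    rk (σ \ S) a + rk S a = rk σ a := by
  unfold rk
  rw [← Finset.card_union_of_disjoint
    (Finset.disjoint_filter_filter Finset.sdiff_disjoint), ← Finset.filter_union,
    Finset.sdiff_union_of_subset hS]

lemma rk_insert_self (T : Finset ℕ) (a : ℕ) (ha : a ∉ T) : rk (insert a T) a = rk T a := by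
  unfold rk
  rw [Finset.filter_insert, if_neg (lt_irrefl a)]

lemma sum_powersetCard_succ {M : Type*} [AddCommMonoid M] (σ : Finset ℕ) (k : ℕ)
    (F : Finset ℕ → ℕ → M) :
    ∑ T ∈ σ.powersetCard k, ∑ a ∈ σ \ T, F (insert a T) a
      = ∑ T ∈ σ.powersetCard (k + 1), ∑ a ∈ T, F T a := by
  rw [Finset.sum_sigma', Finset.sum_sigma']
  refine Finset.sum_nbij' (fun p => ⟨insert p.2 p.1, p.2⟩) (fun p => ⟨p.1.erase p.2, p.2⟩)
    ?_ ?_ ?_ ?_ ?_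
  · rintro ⟨T, a⟩ hp
    rw [Finset.mem_sigma] at hp ⊢
    obtain ⟨hT, ha⟩ := hp
    rw [Finset.mem_powersetCard] at hT
    rw [Finset.mem_sdiff] at ha
    refine ⟨Finset.mem_powersetCard.mpr ⟨Finset.insert_subset ha.1 hT.1, ?_⟩,
      Finset.mem_insert_self _ _⟩
    rw [Finset.card_insert_of_notMem ha.2, hT.2]
  · rintro ⟨T, a⟩ hp
    rw [Finset.mem_sigma] at hp ⊢
    obtain ⟨hT, ha⟩ := hp
    rw [Finset.mem_powersetCard] at hT
    refine ⟨Finset.mem_powersetCard.mpr ⟨(Finset.erase_subset _ _).trans hT.1, ?_⟩, ?_⟩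
    · rw [Finset.card_erase_of_mem ha, hT.2]
      omega
    · rw [Finset.mem_sdiff]
      exact ⟨hT.1 ha, Finset.notMem_erase _ _⟩
  · rintro ⟨T, a⟩ hp
    rw [Finset.mem_sigma, Finset.mem_sdiff] at hp
    simp only [Finset.erase_insert hp.2.2]
  · rintro ⟨T, a⟩ hp
    rw [Finset.mem_sigma] at hp
    simp only [Finset.insert_erase hp.2]
  · rintro ⟨T, a⟩ hp
    rfl

/-- the scalar `∏_{m=1}^{k} (1 + ξ⁻¹ + ⋯ + ξ^{-(m-1)})`. -/
noncomputable def fq (ξ : ℂ) (k : ℕ) : ℂ :=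
  ∏ m ∈ Finset.range k, ∑ j ∈ Finset.range (m + 1), ξ⁻¹ ^ j

lemma mayerD_pow_single (ξ : ℂ) (hξ0 : ξ ≠ 0) (σ : Finset ℕ) (k : ℕ) (hk : k < σ.card) :
    ((mayerD ξ) ^ k) (Finsupp.single σ 1)
      = fq ξ k • ∑ T ∈ σ.powersetCard k,
          ξ ^ (∑ a ∈ T, rk σ a) • Finsupp.single (σ \ T) (1 : ℂ) := by
  induction k with
  | zero => simp [fq]
  | succ k ih =>
    have hk' : k < σ.card := by omega
    rw [pow_succ', Module.End.mul_apply, ih hk', map_smul, map_sum]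
    have step1 : ∀ T ∈ σ.powersetCard k,
        mayerD ξ (ξ ^ (∑ a ∈ T, rk σ a) • Finsupp.single (σ \ T) 1)
          = ∑ a ∈ σ \ T, (ξ ^ (∑ b ∈ insert a T, rk σ b) * ξ⁻¹ ^ rk (insert a T) a) •
              Finsupp.single (σ \ insert a T) (1 : ℂ) := by
      intro T hT
      obtain ⟨hTs, hTc⟩ := Finset.mem_powersetCard.mp hT
      have hcard : 2 ≤ (σ \ T).card := by
        rw [Finset.card_sdiff_of_subset hTs, hTc]; omega
      rw [map_smul, mayerD_single ξ _ hcard, Finset.smul_sum]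
      refine Finset.sum_congr rfl fun a ha => ?_
      obtain ⟨haσ, haT⟩ := Finset.mem_sdiff.mp ha
      rw [smul_smul, ← Finset.sdiff_insert]
      congr 1
      have h1 : rk (σ \ T) a + rk T a = rk σ a := rk_sdiff_add σ T hTs a
      have h2 : rk (insert a T) a = rk T a := rk_insert_self T a haT
      have h3 : ∑ b ∈ insert a T, rk σ b = rk σ a + ∑ b ∈ T, rk σ b :=
        Finset.sum_insert haT
      rw [h2, h3, inv_pow, ← div_eq_mul_inv, eq_div_iff (pow_ne_zero _ hξ0), mul_assoc,
        ← pow_add, ← pow_add]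
      congr 1
      omega
    rw [Finset.sum_congr rfl step1,
      sum_powersetCard_succ σ k (fun T a =>
        (ξ ^ (∑ b ∈ T, rk σ b) * ξ⁻¹ ^ rk T a) • Finsupp.single (σ \ T) (1 : ℂ))]
    have step2 : ∀ T ∈ σ.powersetCard (k + 1),
        ∑ a ∈ T, (ξ ^ (∑ b ∈ T, rk σ b) * ξ⁻¹ ^ rk T a) • Finsupp.single (σ \ T) (1 : ℂ)
          = (∑ j ∈ Finset.range (k + 1), ξ⁻¹ ^ j) •
              (ξ ^ (∑ b ∈ T, rk σ b) • Finsupp.single (σ \ T) (1 : ℂ)) := by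
      intro T hT
      obtain ⟨hTs, hTc⟩ := Finset.mem_powersetCard.mp hT
      rw [← Finset.sum_smul, smul_smul]
      congr 1
      rw [← Finset.mul_sum, mul_comm]
      congr 1
      have := sum_rk T (fun n => ξ⁻¹ ^ n)
      rw [hTc] at this
      exact this
    rw [Finset.sum_congr rfl step2, ← Finset.smul_sum, smul_smul]
    congr 1
    rw [fq, fq, Finset.prod_range_succ, mul_comm]

lemma mayerD_pow_card (ξ : ℂ) (hξ0 : ξ ≠ 0) (σ : Finset ℕ) (h : 1 ≤ σ.card) :
    ((mayerD ξ) ^ σ.card) (Finsupp.single σ 1) = 0 := by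
  obtain ⟨n, hn⟩ : ∃ n, σ.card = n + 1 := ⟨σ.card - 1, by omega⟩
  rw [hn, pow_succ', Module.End.mul_apply, mayerD_pow_single ξ hξ0 σ n (by omega), map_smul,
    map_sum]
  rw [Finset.sum_eq_zero, smul_zero]
  intro T hT
  obtain ⟨hTs, hTc⟩ := Finset.mem_powersetCard.mp hT
  rw [map_smul, mayerD_single_zero ξ _ (by rw [Finset.card_sdiff_of_subset hTs, hTc, hn]; omega),
    smul_zero]

end MayerAux

/-- For a simplicial complex `K` and `ξ = e^{2πi/N}`, the Mayer differential
satisfies `d^N = 0` on the chains of `K`. -/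
theorem mayerD_pow_N_eq_zero (N : ℕ) (hN : 2 ≤ N) (ξ : ℂ)
    (hξ : ξ = Complex.exp (2 * Real.pi * Complex.I / N))
    (K : Set (Finset ℕ)) (hK : ∀ s ∈ K, ∀ t ⊆ s, t ∈ K)
    (x : Finset ℕ →₀ ℂ)
    (hx : x ∈ Submodule.span ℂ ((fun σ => Finsupp.single σ (1 : ℂ)) '' K)) :
    ((mayerD ξ) ^ N) x = 0 := by
  have hξ0 : ξ ≠ 0 := by rw [hξ]; exact Complex.exp_ne_zero _
  have hfq : MayerAux.fq ξ N = 0 := by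
    have hprim : IsPrimitiveRoot ξ N := by
      rw [hξ]; exact Complex.isPrimitiveRoot_exp N (by omega)
    have hinv : IsPrimitiveRoot ξ⁻¹ N := hprim.inv
    refine Finset.prod_eq_zero (Finset.mem_range.mpr (show N - 1 < N by omega)) ?_
    have h1 : N - 1 + 1 = N := by omega
    rw [h1]
    exact hinv.geom_sum_eq_zero (by omega)
  induction hx using Submodule.span_induction with
  | mem x hx =>
    obtain ⟨σ, hσK, rfl⟩ := hx
    by_cases hcard : N < σ.card
    · rw [MayerAux.mayerD_pow_single ξ hξ0 σ N hcard, hfq, zero_smul]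
    · push_neg at hcard
      rcases Nat.eq_zero_or_pos σ.card with h0 | h1
      · obtain ⟨m, rfl⟩ : ∃ m, N = m + 1 := ⟨N - 1, by omega⟩
        rw [pow_succ, Module.End.mul_apply, MayerAux.mayerD_single_zero ξ σ (by omega),
          map_zero]
      · have hN' : N = (N - σ.card) + σ.card := by omega
        rw [hN', pow_add, Module.End.mul_apply, MayerAux.mayerD_pow_card ξ hξ0 σ h1,
          map_zero]
  | zero => simp
  | add y z _ _ hy hz => rw [map_add, hy, hz, add_zero]
  | smul c y _ hy => rw [map_smul, hy, smul_zero]
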